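/- With M the maze MDP and M' the corner MDP as above, for every state s ∈ ℤ^d not in an obstacle, the optimal value satisfies V*_M(s) = min over corners c in S(s) ∩ C of [d(s,c) + V*_{M'}(c)], where d is the Manhattan distance and S(s) is the surface of s. -/

import Mathlib

open scoped BigOperators

namespace Maze

/-- Points of the `d`-dimensional integer maze. -/
abbrev Pt (d : ℕ) := Fin d → ℤ

/-- An open axis-aligned hyperrectangular obstacle determined by `a, b`. -/
def Obst {d : ℕ} (a b : Pt d) : Set (Pt d) := {x | ∀ i, a i < x i ∧ x i < b i}

/-- The union of the `k` obstacles. -/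
def OSet {d k : ℕ} (a b : Fin k → Pt d) : Set (Pt d) := ⋃ j, Obst (a j) (b j)

/-- The list of `i`-th coordinates of obstacle boundaries together with the goal coordinate. -/
def Lists {d k : ℕ} (a b : Fin k → Pt d) (g : Pt d) (i : Fin d) : Finset ℤ :=
  (Finset.univ.image fun j => a j i) ∪ (Finset.univ.image fun j => b j i) ∪ {g i}

/-- The surface (closed grid cell) of a point `x` with respect to coordinate lists `L`:
`y` lies in the surface iff in every coordinate `i`, `y i` equals `x i` when `x i` is a
grid value, and otherwise `y i` lies between the grid values surrounding `x i`. -/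
def Surf {d : ℕ} (L : Fin d → Finset ℤ) (x : Pt d) : Set (Pt d) :=
  {y | ∀ i, (x i ∈ L i → y i = x i) ∧ (∀ l ∈ L i, l < x i → l ≤ y i) ∧
      (∀ l ∈ L i, x i < l → y i ≤ l)}

/-- Corners: points all of whose coordinates are grid values. -/
def Corners {d : ℕ} (L : Fin d → Finset ℤ) : Set (Pt d) := {c | ∀ i, c i ∈ L i}

/-- Manhattan distance. -/
def manh {d : ℕ} (s t : Pt d) : ℕ := ∑ i, (s i - t i).natAbs

/-- A unit move in a single coordinate. -/
def Step {d : ℕ} (x y : Pt d) : Prop :=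
  ∃ i, (y i = x i + 1 ∨ y i = x i - 1) ∧ ∀ j, j ≠ i → y j = x j

/-- A maze path of length `n` from `s` to `t` avoiding the obstacle set `O`. -/
def IsMazePath {d : ℕ} (O : Set (Pt d)) (f : ℕ → Pt d) (n : ℕ) (s t : Pt d) : Prop :=
  f 0 = s ∧ f n = t ∧ (∀ m, m < n → Step (f m) (f (m + 1))) ∧ (∀ m, m ≤ n → f m ∉ O)

/-- Minimal number of steps of an obstacle-avoiding maze path from `s` to `t`
(`⊤` if there is none). -/
noncomputable def mazeDist {d : ℕ} (O : Set (Pt d)) (s t : Pt d) : ℕ∞ :=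
  sInf {N : ℕ∞ | ∃ n : ℕ, N = n ∧ ∃ f, IsMazePath O f n s t}

/-- Two corners are adjacent if they agree in all coordinates except one, where their
values are consecutive elements of the corresponding list, and the axis-aligned segment
between them avoids the obstacles. -/
def Adjacent {d : ℕ} (L : Fin d → Finset ℤ) (O : Set (Pt d)) (c c' : Pt d) : Prop :=
  c ∈ Corners L ∧ c' ∈ Corners L ∧
  ∃ i, c i ≠ c' i ∧ (∀ j, j ≠ i → c j = c' j) ∧
    (∀ l ∈ L i, ¬(min (c i) (c' i) < l ∧ l < max (c i) (c' i))) ∧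
    (∀ z : Pt d, (∀ j, j ≠ i → z j = c j) →
      min (c i) (c' i) ≤ z i → z i ≤ max (c i) (c' i) → z ∉ O)

/-- Shortest-path distance from `s` to `t` in the weighted corner graph, with edges
between adjacent corners weighted by their Manhattan distance. -/
noncomputable def cornerDist {d : ℕ} (L : Fin d → Finset ℤ) (O : Set (Pt d))
    (s t : Pt d) : ℕ∞ :=
  sInf {N : ℕ∞ | ∃ (n : ℕ) (c : ℕ → Pt d), c 0 = s ∧ c n = t ∧
    (∀ m, m < n → Adjacent L O (c m) (c (m + 1))) ∧
    N = ∑ m ∈ Finset.range n, (manh (c m) (c (m + 1)) : ℕ∞)}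

-- basics
lemma self_mem_surf {d : ℕ} (L : Fin d → Finset ℤ) (x : Pt d) : x ∈ Surf L x := by
  intro i
  refine ⟨fun _ => rfl, fun l _ hl => le_of_lt hl, fun l _ hl => le_of_lt hl⟩

lemma goal_mem_corners {d k : ℕ} (a b : Fin k → Pt d) (g : Pt d) :
    g ∈ Corners (Lists a b g) := by
  intro i
  simp [Lists]

lemma surf_not_obst {d k : ℕ} {a b : Fin k → Pt d} {g : Pt d} {s y : Pt d}
    (hs : s ∉ OSet a b) (hy : y ∈ Surf (Lists a b g) s) : y ∉ OSet a b := by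
  intro hyO
  rw [OSet, Set.mem_iUnion] at hyO
  obtain ⟨j, hj⟩ := hyO
  apply hs
  rw [OSet, Set.mem_iUnion]
  refine ⟨j, fun i => ?_⟩
  have hyj := hj i
  have hsurf := hy i
  have haL : a j i ∈ Lists a b g i := by
    simp [Lists]
  have hbL : b j i ∈ Lists a b g i := by
    simp [Lists]
  constructor
  · by_contra h
    push_neg at h
    rcases lt_or_eq_of_le h with h' | h'
    · have := hsurf.2.2 (a j i) haL h'
      omega
    · have := hsurf.1 (h' ▸ haL)
      omega
  · by_contra h
    push_neg at h
    rcases lt_or_eq_of_le h with h' | h'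
    · have := hsurf.2.1 (b j i) hbL h'
      omega
    · have := hsurf.1 (h'.symm ▸ hbL)
      omega

lemma manh_eq_zero {d : ℕ} {s t : Pt d} (h : manh s t = 0) : s = t := by
  funext i
  rw [manh, Finset.sum_eq_zero_iff] at h
  have := h i (Finset.mem_univ i)
  omega

lemma manh_triangle {d : ℕ} (s t u : Pt d) : manh s u ≤ manh s t + manh t u := by
  rw [manh, manh, manh, ← Finset.sum_add_distrib]
  exact Finset.sum_le_sum fun i _ => by omega

lemma manh_step {d : ℕ} {s t : Pt d} (h : Step s t) : manh t s = 1 := by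
  obtain ⟨i, hi, hj⟩ := h
  rw [manh, Finset.sum_eq_single i]
  · omega
  · intro j _ hji
    rw [hj j hji]; omega
  · intro h; exact absurd (Finset.mem_univ i) h

lemma enat_csInf_mem {S : Set ℕ∞} (h : S.Nonempty) : sInf S ∈ S := csInf_mem h



lemma manh_split {d : ℕ} (u v : Pt d) (i : Fin d) :
    manh u v = ∑ j ∈ Finset.univ.erase i, (u j - v j).natAbs + (u i - v i).natAbs :=
  (Finset.sum_erase_add _ _ (Finset.mem_univ i)).symm

lemma mazePath_concat {d : ℕ} {O : Set (Pt d)} {f h : ℕ → Pt d} {m n : ℕ} {s t u : Pt d}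
    (hf : IsMazePath O f m s t) (hh : IsMazePath O h n t u) :
    ∃ F, IsMazePath O F (m + n) s u := by
  obtain ⟨hf0, hfm, hfs, hfa⟩ := hf
  obtain ⟨hh0, hhn, hhs, hha⟩ := hh
  refine ⟨fun q => if q < m then f q else h (q - m), ?_, ?_, ?_, ?_⟩
  · by_cases hm : 0 < m
    · simp [hm, hf0]
    · have hm0 : m = 0 := by omega
      subst hm0
      simpa [hh0] using (hfm ▸ hf0 : t = s).symm ▸ rfl
  · have : ¬ (m + n < m) := by omega
    simp only [this, if_false]
    simpa using hhn
  · intro q hq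
    by_cases h1 : q + 1 < m
    · have h2 : q < m := by omega
      simp only [h1, h2, if_true]
      exact hfs q h2
    · by_cases h2 : q < m
      · have hqm : q + 1 = m := by omega
        simp only [h1, h2, if_true, if_false]
        have : h (q + 1 - m) = f (q + 1) := by
          rw [hqm]
          simp [hh0, ← hfm, hqm]
        rw [this]
        exact hfs q h2
      · simp only [h1, h2, if_false]
        have hqm : q + 1 - m = (q - m) + 1 := by omega
        rw [hqm]
        exact hhs (q - m) (by omega)
  · intro q hq
    by_cases h2 : q < m
    · simp only [h2, if_true]
      exact hfa q (by omega)
    · simp only [h2, if_false]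
      exact hha (q - m) (by omega)

lemma box_path {d : ℕ} (O : Set (Pt d)) : ∀ (n : ℕ) (s c : Pt d), manh s c = n →
    (∀ z : Pt d, (∀ j, min (s j) (c j) ≤ z j ∧ z j ≤ max (s j) (c j)) → z ∉ O) →
    ∃ f, IsMazePath O f n s c := by
  intro n
  induction n with
  | zero =>
    intro s c h hbox
    have hsc : s = c := manh_eq_zero h
    exact ⟨fun _ => s, rfl, hsc, fun m hm => absurd hm (by omega),
      fun m _ => hbox s fun j => by constructor <;> omega⟩
  | succ n ih =>
    intro s c h hbox
    have hex : ∃ i, s i ≠ c i := by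
      by_contra hc
      push_neg at hc
      have : manh s c = 0 := by
        rw [manh]
        exact Finset.sum_eq_zero fun i _ => by have := hc i; omega
      omega
    obtain ⟨i, hi⟩ := hex
    set s' := Function.update s i (s i + (if s i < c i then 1 else -1)) with hs'
    have hs'i : s' i = s i + (if s i < c i then 1 else -1) := Function.update_self _ _ _
    have hs'j : ∀ j, j ≠ i → s' j = s j := fun j hj => Function.update_of_ne hj _ _
    have hstep : Step s s' := by
      refine ⟨i, ?_, hs'j⟩
      rw [hs'i]
      split_ifs <;> omega
    have hterm : (s' i - c i).natAbs + 1 = (s i - c i).natAbs := by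
      rw [hs'i]
      split_ifs with h' <;> omega
    have hmanh : manh s' c = n := by
      have e1 := manh_split s' c i
      have e2 := manh_split s c i
      have hsum : ∑ j ∈ Finset.univ.erase i, (s' j - c j).natAbs
          = ∑ j ∈ Finset.univ.erase i, (s j - c j).natAbs :=
        Finset.sum_congr rfl fun j hj => by rw [hs'j j (Finset.ne_of_mem_erase hj)]
      omega
    have hbox' : ∀ z : Pt d, (∀ j, min (s' j) (c j) ≤ z j ∧ z j ≤ max (s' j) (c j)) →
        (∀ j, min (s j) (c j) ≤ z j ∧ z j ≤ max (s j) (c j)) := by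
      intro z hz j
      have hzj := hz j
      by_cases hji : j = i
      · subst hji
        have := hs'i
        split_ifs at this <;> simp only [min_def, max_def] at hzj ⊢ <;> split_ifs at hzj ⊢ <;> omega
      · rw [hs'j j hji] at hzj
        exact hzj
    obtain ⟨f, hf0, hfn, hfs, hfa⟩ := ih s' c hmanh fun z hz => hbox z (hbox' z hz)
    refine ⟨fun q => if q = 0 then s else f (q - 1), by simp, ?_, ?_, ?_⟩
    · simp only [Nat.succ_ne_zero, if_false]
      simpa using hfn
    · intro q hq
      by_cases hq0 : q = 0
      · subst hq0
        simpa [hf0] using hstep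
      · have : q + 1 - 1 = (q - 1) + 1 := by omega
        simp only [hq0, Nat.succ_ne_zero, if_false, this]
        exact hfs (q - 1) (by omega)
    · intro q hq
      by_cases hq0 : q = 0
      · subst hq0
        simpa using hbox s fun j => by constructor <;> omega
      · simp only [hq0, if_false]
        exact hfa (q - 1) (by omega)


lemma box_subset_surf {d : ℕ} {L : Fin d → Finset ℤ} {s c : Pt d} (hc : c ∈ Surf L s)
    {z : Pt d} (hz : ∀ j, min (s j) (c j) ≤ z j ∧ z j ≤ max (s j) (c j)) : z ∈ Surf L s := by
  intro i
  obtain ⟨h1, h2, h3⟩ := hc i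
  obtain ⟨hz1, hz2⟩ := hz i
  refine ⟨fun hm => ?_, fun l hl hls => ?_, fun l hl hls => ?_⟩
  · have := h1 hm
    simp only [min_def, max_def] at hz1 hz2
    split_ifs at hz1 hz2 <;> omega
  · have := h2 l hl hls
    simp only [min_def] at hz1
    split_ifs at hz1 <;> omega
  · have := h3 l hl hls
    simp only [max_def] at hz2
    split_ifs at hz2 <;> omega

lemma adjacent_path {d : ℕ} {L : Fin d → Finset ℤ} {O : Set (Pt d)} {c c' : Pt d}
    (h : Adjacent L O c c') : ∃ f, IsMazePath O f (manh c c') c c' := by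
  obtain ⟨hc, hc', i, hi, hoth, _, hseg⟩ := h
  refine box_path O _ c c' rfl fun z hz => hseg z (fun j hj => ?_) (hz i).1 (hz i).2
  have h1 := hz j
  have h2 := hoth j hj
  simp only [min_def, max_def] at h1
  split_ifs at h1 <;> omega

lemma cornerPath_mazePath {d : ℕ} {L : Fin d → Finset ℤ} {O : Set (Pt d)} :
    ∀ (m : ℕ) (cp : ℕ → Pt d), (∀ q, q < m → Adjacent L O (cp q) (cp (q + 1))) →
    cp 0 ∉ O →
    ∃ F, IsMazePath O F (∑ q ∈ Finset.range m, manh (cp q) (cp (q + 1))) (cp 0) (cp m) := by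
  intro m
  induction m with
  | zero =>
    intro cp _ h0
    simp only [Finset.sum_range_zero]
    exact ⟨fun _ => cp 0, rfl, rfl, fun q hq => absurd hq (by omega), fun q _ => h0⟩
  | succ m ih =>
    intro cp hadj h0
    obtain ⟨F1, hF1⟩ := ih cp (fun q hq => hadj q (by omega)) h0
    obtain ⟨F2, hF2⟩ := adjacent_path (hadj m (by omega))
    rw [Finset.sum_range_succ]
    exact mazePath_concat hF1 hF2

lemma dir_le {d k : ℕ} (a b : Fin k → Pt d) (g : Pt d) (s : Pt d) (hs : s ∉ OSet a b)
    (c : Pt d) (hcs : c ∈ Surf (Lists a b g) s) :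
    mazeDist (OSet a b) s g ≤ (manh s c : ℕ∞) + cornerDist (Lists a b g) (OSet a b) c g := by
  set L := Lists a b g
  set O := OSet a b
  set S := {N : ℕ∞ | ∃ (n : ℕ) (cp : ℕ → Pt d), cp 0 = c ∧ cp n = g ∧
    (∀ m, m < n → Adjacent L O (cp m) (cp (m + 1))) ∧
    N = ∑ m ∈ Finset.range n, (manh (cp m) (cp (m + 1)) : ℕ∞)} with hS
  have hcd : cornerDist L O c g = sInf S := rfl
  by_cases hne : S.Nonempty
  · obtain ⟨n, cp, h0, hn, hadj, hN⟩ := csInf_mem hne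
    -- maze path from s to c
    obtain ⟨f1, hf1⟩ := box_path O (manh s c) s c rfl fun z hz =>
      surf_not_obst hs (box_subset_surf hcs hz)
    have hc0 : cp 0 ∉ O := h0 ▸ surf_not_obst hs hcs
    obtain ⟨F2, hF2⟩ := cornerPath_mazePath n cp hadj hc0
    rw [h0, hn] at hF2
    obtain ⟨F, hF⟩ := mazePath_concat hf1 hF2
    have hle : mazeDist O s g ≤
        ((manh s c + ∑ m ∈ Finset.range n, manh (cp m) (cp (m + 1)) : ℕ) : ℕ∞) :=
      sInf_le ⟨_, rfl, F, hF⟩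
    rw [hcd, hN]
    calc mazeDist O s g ≤ _ := hle
      _ = _ := by push_cast; ring
  · rw [Set.not_nonempty_iff_eq_empty] at hne
    rw [hcd, hne, sInf_empty]
    simp


lemma manh_comm {d : ℕ} (u v : Pt d) : manh u v = manh v u :=
  Finset.sum_congr rfl fun i _ => by omega

lemma manh_self {d : ℕ} (u : Pt d) : manh u u = 0 := by simp [manh]

lemma step_transfer {d k : ℕ} (a b : Fin k → Pt d) (g : Pt d) {s s' c' : Pt d}
    (hs : s ∉ OSet a b) (hs' : s' ∉ OSet a b) (hstep : Step s s')
    (hc's : c' ∈ Surf (Lists a b g) s') (hc'c : c' ∈ Corners (Lists a b g)) :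
    ∃ c, c ∈ Surf (Lists a b g) s ∧ c ∈ Corners (Lists a b g) ∧
      manh s c + manh c c' ≤ manh s' c' + 1 ∧
      (c = c' ∨ Adjacent (Lists a b g) (OSet a b) c c') := by
  set L := Lists a b g with hL
  set O := OSet a b with hO
  obtain ⟨i, hi, hoth⟩ := hstep
  obtain ⟨p1, p2, p3⟩ := hc's i
  by_cases hsc : c' ∈ Surf L s
  · refine ⟨c', hsc, hc'c, ?_, Or.inl rfl⟩
    have h1 : manh s c' ≤ manh s s' + manh s' c' := manh_triangle s s' c'
    have h2 : manh s' s = 1 := manh_step ⟨i, hi, hoth⟩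
    have h3 : manh s s' = 1 := (manh_comm s s').trans h2
    have h4 : manh c' c' = 0 := manh_self c'
    omega
  · have key : s i ∈ L i ∧ c' i ≠ s i := by
      by_contra hk
      push_neg at hk
      apply hsc
      intro j
      by_cases hj : j = i
      · subst hj
        refine ⟨fun hm => hk hm, fun l hl hls => ?_, fun l hl hls => ?_⟩
        · rcases hi with h | h
          · exact p2 l hl (by omega)
          · rcases lt_or_eq_of_le (show l ≤ s' j by omega) with h' | h'
            · exact p2 l hl h'
            · have := p1 (h' ▸ hl); omega
        · rcases hi with h | h
          · rcases lt_or_eq_of_le (show s' j ≤ l by omega) with h' | h'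
            · exact p3 l hl h'
            · have := p1 (h'.symm ▸ hl); omega
          · exact p3 l hl (by omega)
      · have h := hc's j
        rw [hoth j hj] at h
        exact h
    obtain ⟨hsiL, hne⟩ := key
    set c := Function.update c' i (s i) with hcdef
    have hci : c i = s i := Function.update_self _ _ _
    have hcj : ∀ j, j ≠ i → c j = c' j := fun j hj => Function.update_of_ne hj _ _
    have hpos : (s' i = s i + 1 ∧ s i + 1 ≤ c' i) ∨ (s' i = s i - 1 ∧ c' i ≤ s i - 1) := by
      rcases hi with h | h
      · have := p2 (s i) hsiL (by omega)
        left; exact ⟨h, by omega⟩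
      · have := p3 (s i) hsiL (by omega)
        right; exact ⟨h, by omega⟩
    have hcS : c ∈ Surf L s := by
      intro j
      by_cases hj : j = i
      · subst hj
        rw [hci]
        exact ⟨fun _ => rfl, fun l _ h => le_of_lt h, fun l _ h => le_of_lt h⟩
      · rw [hcj j hj]
        have h := hc's j
        rw [hoth j hj] at h
        exact h
    have hcC : c ∈ Corners L := by
      intro j
      by_cases hj : j = i
      · subst hj; rw [hci]; exact hsiL
      · rw [hcj j hj]; exact hc'c j
    have hmanh : manh s c + manh c c' ≤ manh s' c' + 1 := by
      have e1 := manh_split s c i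
      have e2 := manh_split c c' i
      have e3 := manh_split s' c' i
      have hsum1 : ∑ j ∈ Finset.univ.erase i, (s j - c j).natAbs
          = ∑ j ∈ Finset.univ.erase i, (s' j - c' j).natAbs :=
        Finset.sum_congr rfl fun j hj => by
          rw [hcj j (Finset.ne_of_mem_erase hj), hoth j (Finset.ne_of_mem_erase hj)]
      have hsum2 : ∑ j ∈ Finset.univ.erase i, (c j - c' j).natAbs = 0 :=
        Finset.sum_eq_zero fun j hj => by
          rw [hcj j (Finset.ne_of_mem_erase hj)]; omega
      omega
    -- adjacency
    have hadj : Adjacent L O c c' := by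
      refine ⟨hcC, hc'c, i, by omega, hcj, ?_, ?_⟩
      · intro l hl hcon
        obtain ⟨h1, h2⟩ := hcon
        rcases hpos with ⟨he, hge⟩ | ⟨he, hle⟩
        · have hl2 : l < c' i := by omega
          rcases lt_or_eq_of_le (show s' i ≤ l by omega) with h' | h'
          · have := p3 l hl h'; omega
          · have := p1 (h' ▸ hl); omega
        · have hl2 : c' i < l := by omega
          rcases lt_or_eq_of_le (show l ≤ s' i by omega) with h' | h'
          · have := p2 l hl h'; omega
          · have := p1 (h'.symm ▸ hl); omega
      · intro z hzj hz1 hz2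
        have hzsurf : ∀ j, j ≠ i → z j = c' j := fun j hj => (hzj j hj).trans (hcj j hj)
        rcases hpos with ⟨he, hge⟩ | ⟨he, hle⟩
        · -- z i ∈ [s i, c' i]
          have hzl : s i ≤ z i := by omega
          have hzu : z i ≤ c' i := by omega
          rcases eq_or_lt_of_le hzl with h' | h'
          · -- z ∈ Surf L s
            refine surf_not_obst (g := g) hs (fun j => ?_)
            by_cases hj : j = i
            · subst hj
              exact ⟨fun _ => h'.symm, fun l _ hls => by omega, fun l _ hls => by omega⟩
            · rw [hzsurf j hj]
              have h := hc's j
              rw [hoth j hj] at h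
              exact h
          · -- z ∈ Surf L s'
            refine surf_not_obst (g := g) hs' (fun j => ?_)
            by_cases hj : j = i
            · subst hj
              refine ⟨fun hm => ?_, fun l _ hls => by omega, fun l hl hls => ?_⟩
              · have := p1 hm; omega
              · have := p3 l hl hls; omega
            · rw [hzsurf j hj]
              exact hc's j
        · have hzl : c' i ≤ z i := by omega
          have hzu : z i ≤ s i := by omega
          rcases eq_or_lt_of_le hzu with h' | h'
          · refine surf_not_obst (g := g) hs (fun j => ?_)
            by_cases hj : j = i
            · subst hj
              exact ⟨fun _ => h', fun l _ hls => by omega, fun l _ hls => by omega⟩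
            · rw [hzsurf j hj]
              have h := hc's j
              rw [hoth j hj] at h
              exact h
          · refine surf_not_obst (g := g) hs' (fun j => ?_)
            by_cases hj : j = i
            · subst hj
              refine ⟨fun hm => ?_, fun l hl hls => ?_, fun l _ hls => by omega⟩
              · have := p1 hm; omega
              · have := p2 l hl hls; omega
            · rw [hzsurf j hj]
              exact hc's j
    exact ⟨c, hcS, hcC, hmanh, Or.inr hadj⟩

lemma exists_corner_path {d k : ℕ} (a b : Fin k → Pt d) (g : Pt d) :
    ∀ (n : ℕ) (s : Pt d), s ∉ OSet a b → (∃ f, IsMazePath (OSet a b) f n s g) →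
    ∃ c, c ∈ Surf (Lists a b g) s ∧ c ∈ Corners (Lists a b g) ∧
      ∃ (m : ℕ) (cp : ℕ → Pt d), cp 0 = c ∧ cp m = g ∧
        (∀ q, q < m → Adjacent (Lists a b g) (OSet a b) (cp q) (cp (q + 1))) ∧
        manh s c + ∑ q ∈ Finset.range m, manh (cp q) (cp (q + 1)) ≤ n := by
  intro n
  induction n with
  | zero =>
    rintro s hsO ⟨f, hf⟩
    have hsg : s = g := hf.1 ▸ hf.2.1 ▸ rfl
    subst hsg
    exact ⟨s, self_mem_surf _ s, goal_mem_corners a b s, 0, fun _ => s, rfl, rfl,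
      fun q hq => absurd hq (by omega), by simp [manh_self]⟩
  | succ n ih =>
    rintro s hsO ⟨f, hf⟩
    obtain ⟨hf0, hfn, hfs, hfa⟩ := hf
    have hs2O : f 1 ∉ OSet a b := hfa 1 (by omega)
    have hstep : Step s (f 1) := hf0 ▸ hfs 0 (by omega)
    have hpath2 : ∃ f', IsMazePath (OSet a b) f' n (f 1) g :=
      ⟨fun q => f (q + 1), rfl, hfn, fun q hq => hfs (q + 1) (by omega),
        fun q hq => hfa (q + 1) (by omega)⟩
    obtain ⟨c', hc'S, hc'C, m, cp, hcp0, hcpm, hadj, hsum⟩ := ih (f 1) hs2O hpath2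
    obtain ⟨c, hcS, hcC, hman, hcase⟩ := step_transfer a b g hsO hs2O hstep hc'S hc'C
    rcases hcase with rfl | hadj2
    · refine ⟨c, hcS, hcC, m, cp, hcp0, hcpm, hadj, ?_⟩
      have := manh_self c
      omega
    · refine ⟨c, hcS, hcC, m + 1, fun q => if q = 0 then c else cp (q - 1), rfl, ?_, ?_, ?_⟩
      · simp [hcpm]
      · intro q hq
        by_cases hq0 : q = 0
        · subst hq0
          simpa [hcp0] using hadj2
        · have h1 : q + 1 - 1 = (q - 1) + 1 := by omega
          simp only [hq0, Nat.succ_ne_zero, if_false, h1]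
          exact hadj (q - 1) (by omega)
      · rw [Finset.sum_range_succ']
        have hcg : ∑ q ∈ Finset.range m,
            manh (if q + 1 = 0 then c else cp (q + 1 - 1))
              (if q + 1 + 1 = 0 then c else cp (q + 1 + 1 - 1))
            = ∑ q ∈ Finset.range m, manh (cp q) (cp (q + 1)) :=
          Finset.sum_congr rfl fun q _ => by norm_num
        rw [hcg]
        norm_num [hcp0]
        omega


/-- for every state `s` not in an obstacle, the optimal maze value equals the
minimum over corners `c` in the surface of `s` of `d(s,c) + V*_{M'}(c)`. -/
theorem value_via_surface_corners {d k : ℕ} (a b : Fin k → Pt d) (g : Pt d) (s : Pt d)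
    (hs : s ∉ OSet a b) :
    mazeDist (OSet a b) s g =
      ⨅ c ∈ Surf (Lists a b g) s ∩ Corners (Lists a b g),
        ((manh s c : ℕ∞) + cornerDist (Lists a b g) (OSet a b) c g) := by
  apply le_antisymm
  · exact le_iInf fun c => le_iInf fun hc => dir_le a b g s hs c hc.1
  · rw [mazeDist]
    apply le_sInf
    rintro N ⟨n, rfl, f, hf⟩
    obtain ⟨c, hcS, hcC, m, cp, hcp0, hcpm, hadj, hsum⟩ :=
      exists_corner_path a b g n s hs ⟨f, hf⟩
    have h1 : (⨅ c ∈ Surf (Lists a b g) s ∩ Corners (Lists a b g),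
        ((manh s c : ℕ∞) + cornerDist (Lists a b g) (OSet a b) c g))
        ≤ (manh s c : ℕ∞) + cornerDist (Lists a b g) (OSet a b) c g :=
      iInf₂_le c ⟨hcS, hcC⟩
    have h2 : cornerDist (Lists a b g) (OSet a b) c g
        ≤ ∑ q ∈ Finset.range m, (manh (cp q) (cp (q + 1)) : ℕ∞) :=
      sInf_le ⟨m, cp, hcp0, hcpm, hadj, rfl⟩
    calc _ ≤ (manh s c : ℕ∞) + cornerDist (Lists a b g) (OSet a b) c g := h1
      _ ≤ (manh s c : ℕ∞) + ∑ q ∈ Finset.range m, (manh (cp q) (cp (q + 1)) : ℕ∞) :=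
          add_le_add_right h2 _
      _ = ((manh s c + ∑ q ∈ Finset.range m, manh (cp q) (cp (q + 1)) : ℕ) : ℕ∞) := by
          push_cast; ring
      _ ≤ (n : ℕ∞) := by exact_mod_cast hsum


end Maze
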